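/- Let f : {0,1}^n → {0,1} be a function with exactly m decreasing edges. Then every monotone function g : {0,1}^n → {0,1} differs from f on at least m/n points of {0,1}^n; consequently, dist(f, Mono) ≥ m/(n·2^n). -/

import Mathlib

open Finset

attribute [local instance] Classical.propDecidable

variable {n : ℕ}

/-- The edge of the hypercube along dimension `i` at `x` (the pair
`{x^{(i→0)}, x^{(i→1)}}`) is decreasing for `f`. -/
def decEdge (f : (Fin n → Bool) → Bool) (x : Fin n → Bool) (i : Fin n) : Prop :=
  f (Function.update x i false) = true ∧ f (Function.update x i true) = false

/-- `x` with its `i`-th coordinate flipped. -/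
def flipC (x : Fin n → Bool) (i : Fin n) : Fin n → Bool := Function.update x i (!(x i))

/-- `g` is monotone. -/
def monoB (g : (Fin n → Bool) → Bool) : Prop :=
  ∀ x y : Fin n → Bool, (∀ i, x i ≤ y i) → g x ≤ g y

/-- Distance of `f` to the set of monotone functions. -/
noncomputable def distMono (f : (Fin n → Bool) → Bool) : ℝ :=
  sInf {d : ℝ | ∃ g : (Fin n → Bool) → Bool, monoB g ∧
    d = ((univ.filter fun x => f x ≠ g x).card : ℝ) / 2 ^ n}

/-- `I_f⁻(x)`: the number of decreasing edges of `f` incident on `x`. -/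
noncomputable def Iminus (f : (Fin n → Bool) → Bool) (x : Fin n → Bool) : ℕ :=
  (univ.filter fun i => decEdge f x i).card

/-- The number of decreasing edges of `f` (each edge represented by its lower
endpoint together with its dimension). -/
noncomputable def numDecEdges (f : (Fin n → Bool) → Bool) : ℕ :=
  (univ.filter fun q : (Fin n → Bool) × Fin n => q.1 q.2 = false ∧ decEdge f q.1 q.2).card

/-- The event Capture(x, S, f). -/
def Capture (f : (Fin n → Bool) → Bool) (S : Finset (Fin n)) (x : Fin n → Bool) : Prop :=
  ∃ i ∈ S, decEdge f x i ∧ ∀ j ∈ S \ {i}, ¬ decEdge f (flipC x i) j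

/-- Hamming weight of `x` restricted to the coordinates in `M`. -/
noncomputable def wt (M : Finset (Fin n)) (x : Fin n → Bool) : ℕ :=
  (M.filter fun i => x i = true).card

/-- `g` is unate. -/
def unate (g : (Fin n → Bool) → Bool) : Prop :=
  ∃ σ : Fin n → Bool, monoB (fun x => g (fun i => xor (x i) (σ i)))

/-- Distance of `f` to the set of unate functions. -/
noncomputable def distUnate (f : (Fin n → Bool) → Bool) : ℝ :=
  sInf {d : ℝ | ∃ g : (Fin n → Bool) → Bool, unate g ∧
    d = ((univ.filter fun x => f x ≠ g x).card : ℝ) / 2 ^ n}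

/-- `g` is a `k`-junta. -/
def isJunta (k : ℕ) (g : (Fin n → Bool) → Bool) : Prop :=
  ∃ J : Finset (Fin n), J.card ≤ k ∧
    ∀ x y : Fin n → Bool, (∀ i ∈ J, x i = y i) → g x = g y

/-- Distance of `f` to the set of `k`-juntas. -/
noncomputable def distJunta (k : ℕ) (f : (Fin n → Bool) → Bool) : ℝ :=
  sInf {d : ℝ | ∃ g : (Fin n → Bool) → Bool, isJunta k g ∧
    d = ((univ.filter fun x => f x ≠ g x).card : ℝ) / 2 ^ n}

/-- `I⁻_{f,red}(x)` for the coloring `col` (an edge is identified by its lower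
endpoint along its dimension; `col e i = true` means the edge along dimension `i`
at `e` is red). -/
noncomputable def IredCol (f : (Fin n → Bool) → Bool)
    (col : (Fin n → Bool) → Fin n → Bool) (x : Fin n → Bool) : ℕ :=
  if f x = true then
    (univ.filter fun i => decEdge f x i ∧ col (Function.update x i false) i = true).card
  else 0

/-- `I⁻_{f,blue}(x)` for the coloring `col`. -/
noncomputable def IblueCol (f : (Fin n → Bool) → Bool)
    (col : (Fin n → Bool) → Fin n → Bool) (x : Fin n → Bool) : ℕ :=
  if f x = false then
    (univ.filter fun i => decEdge f x i ∧ col (Function.update x i false) i = false).card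
  else 0

/-- `Ψ_M`: the middle layer of the subcube `{0,1}^M`. -/
noncomputable def PsiSet (M : Finset (Fin n)) : Finset (↥M → Bool) :=
  univ.filter fun z => (univ.filter fun i : ↥M => z i = true).card = n / 4

/-- `x` is an erased point (for parameter `κ` and control set `M`). -/
def ErasedPt (κ : ℝ) (M : Finset (Fin n)) (x : Fin n → Bool) : Prop :=
  wt M x = n / 4 ∧ |(wt Mᶜ x : ℝ) - (n : ℝ) / 4| ≤ (n : ℝ) ^ κ

/-- `Maj(x_{M̄})`: majority on the coordinates outside `M`. -/
noncomputable def MajBar (M : Finset (Fin n)) (x : Fin n → Bool) : Bool :=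
  decide (n / 4 < wt Mᶜ x)

/-- `F` is a completion of the `D⁻` instance determined by `(M, P)`. -/
def DminusCompletion (κ : ℝ) (M : Finset (Fin n)) (P : Finset (↥M → Bool))
    (F : (Fin n → Bool) → Bool) : Prop :=
  (∀ x, wt M x < n / 4 → F x = false) ∧
  (∀ x, n / 4 < wt M x → F x = true) ∧
  (∀ x, wt M x = n / 4 → ¬ ErasedPt κ M x →
    F x = if (fun i : ↥M => x i.1) ∈ P then MajBar M x else !(MajBar M x))

/-- The function `F` of Statement 12: `F(x) = 1` iff `|x_M| > n/4`, or
`|x_M| = n/4` and `x_M ∉ P`. -/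
noncomputable def DplusF (M : Finset (Fin n)) (P : Finset (↥M → Bool))
    (x : Fin n → Bool) : Bool :=
  if n / 4 < wt M x then true
  else if wt M x = n / 4 ∧ (fun i : ↥M => x i.1) ∉ P then true
  else false

/-- if `f` has exactly `m` decreasing edges, then every monotone `g`
differs from `f` on at least `m/n` points, hence `dist(f, Mono) ≥ m/(n·2^n)`. -/
theorem stmt0 (n : ℕ) (hn : 0 < n) (f : (Fin n → Bool) → Bool) (m : ℕ)
    (hm : numDecEdges f = m) :
    (∀ g : (Fin n → Bool) → Bool, monoB g →
      (m : ℝ) / n ≤ ((univ.filter fun x => f x ≠ g x).card : ℝ)) ∧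
    (m : ℝ) / (n * 2 ^ n) ≤ distMono f := by
  classical
  have key : ∀ g : (Fin n → Bool) → Bool, monoB g →
      m ≤ ((univ.filter fun x => f x ≠ g x).card) * n := by
    intro g hg
    subst hm
    set D := univ.filter fun x => f x ≠ g x with hD
    have hcard : (univ.filter fun q : (Fin n → Bool) × Fin n =>
        q.1 q.2 = false ∧ decEdge f q.1 q.2).card
        ≤ (D ×ˢ (univ : Finset (Fin n))).card := by
      apply Finset.card_le_card_of_injOn
        (fun q => ((if f q.1 = g q.1 then Function.update q.1 q.2 true else q.1), q.2))
      · intro q hq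
        simp only [mem_coe, mem_filter, mem_univ, true_and] at hq
        obtain ⟨hlow, hd⟩ := hq
        have hqx : Function.update q.1 q.2 false = q.1 := by
          funext j
          by_cases h : j = q.2
          · subst h; simp [hlow]
          · simp [Function.update, h]
        have hf0 : f q.1 = true := by rw [← hqx]; exact hd.1
        rw [Finset.mem_coe, Finset.mem_product]
        beta_reduce
        refine ⟨?_, mem_univ _⟩
        by_cases hfg : f q.1 = g q.1
        · have hg1 : g q.1 = true := hfg ▸ hf0
          have hmono : g q.1 ≤ g (Function.update q.1 q.2 true) := by
            apply hg
            intro i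
            by_cases h : i = q.2
            · subst h; simp [hlow]
            · simp [Function.update, h]
          have : g (Function.update q.1 q.2 true) = true := by
            rw [hg1] at hmono
            exact le_antisymm (Bool.le_true _) hmono
          rw [if_pos hfg]
          simp only [hD, mem_filter, mem_univ, true_and]
          rw [hd.2, this]; simp
        · rw [if_neg hfg]
          simp only [hD, mem_filter, mem_univ, true_and]
          exact hfg
      · intro a ha b hb hab
        simp only [mem_coe, mem_filter, mem_univ, true_and] at ha hb
        simp only [Prod.mk.injEq] at hab
        obtain ⟨h1, h2⟩ := hab
        have recover : ∀ c : (Fin n → Bool) × Fin n, c.1 c.2 = false →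
            Function.update (if f c.1 = g c.1 then Function.update c.1 c.2 true else c.1)
              c.2 false = c.1 := by
          intro c hc
          by_cases hfg : f c.1 = g c.1
          · simp only [if_pos hfg]
            funext j
            by_cases h : j = c.2
            · subst h; simp [hc]
            · simp [Function.update, h]
          · simp only [if_neg hfg]
            funext j
            by_cases h : j = c.2
            · subst h; simp [hc]
            · simp [Function.update, h]
        have := recover a ha.1
        rw [h1, h2, recover b hb.1] at this
        exact Prod.ext this.symm h2
    rw [Finset.card_product] at hcard
    rw [Finset.card_univ, Fintype.card_fin] at hcard
    unfold numDecEdges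
    exact hcard
  have hnR : (0:ℝ) < n := by exact_mod_cast hn
  have main : ∀ g : (Fin n → Bool) → Bool, monoB g →
      (m : ℝ) / n ≤ ((univ.filter fun x => f x ≠ g x).card : ℝ) := by
    intro g hg
    rw [div_le_iff₀ hnR]
    exact_mod_cast key g hg
  refine ⟨main, ?_⟩
  unfold distMono
  have h2n : (0:ℝ) < 2 ^ n := by positivity
  haveI : Nonempty ((Fin n → Bool) × Fin n) := ⟨(fun _ => false, ⟨0, hn⟩)⟩
  apply le_csInf
  · exact ⟨((univ.filter fun x => f x ≠ (fun _ => true) x).card : ℝ) / 2 ^ n,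
      (fun _ => true), fun x y _ => le_refl _, rfl⟩
  · rintro d ⟨g, hg, rfl⟩
    rw [show (m : ℝ) / (n * 2 ^ n) = ((m : ℝ) / n) / 2 ^ n by rw [div_div]]
    exact div_le_div_of_nonneg_right (main g hg) h2n.le
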